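/- Let Y = ℝ^k \ B, the complement of a closed Euclidean ball B in ℝ^k with k > 1. Then for all p, q ∈ Y the inner distance satisfies d_Y(p,q) ≤ π‖p−q‖. In particular Y is Lipschitz normally embedded with constant π. -/

import Mathlib

open Set Filter Metric

noncomputable section

/-- The inner (length) extended distance on a subset `X`: the infimum of lengths of
paths inside `X` joining `p` to `q`. -/
def innerEDist {E : Type*} [EMetricSpace E] (X : Set E) (p q : E) : ENNReal :=
  ⨅ (γ : Path p q) (_ : Set.range γ ⊆ X), eVariationOn (fun t => γ t) Set.univ

open Real
open scoped NNReal

set_option maxHeartbeats 1000000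

section helpers

lemma eVar_path_eq {E : Type*} [EMetricSpace E] (f : ℝ → E) :
    eVariationOn (fun t : unitInterval => f t) univ = eVariationOn f (Icc 0 1) := by
  have h : (fun t : unitInterval => f t) = f ∘ (Subtype.val : unitInterval → ℝ) := rfl
  rw [h, eVariationOn.comp_eq_of_monotoneOn f (Subtype.val : unitInterval → ℝ)
    (fun a _ b _ hab => hab)]
  congr 1
  simp [Subtype.coe_image_univ]
  rfl

lemma eVar_le_of_lipschitz {E : Type*} [MetricSpace E] {f : ℝ → E} {K : ℝ≥0}
    (hf : LipschitzWith K f) : eVariationOn f (Icc 0 1) ≤ (K : ENNReal) := by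
  have h := (hf.lipschitzOnWith (s := Icc (0:ℝ) 1)).comp_eVariationOn_le
      (mapsTo_id (Icc (0:ℝ) 1))
  have h2 : eVariationOn (id : ℝ → ℝ) (Icc 0 1) ≤ ENNReal.ofReal ((1:ℝ) - 0) := by
    have := MonotoneOn.eVariationOn_le (f := (id : ℝ → ℝ)) (s := Icc (0:ℝ) 1)
      (monotoneOn_id) (a := 0) (b := 1) (by simp) (by norm_num)
    simpa using this
  calc eVariationOn f (Icc (0:ℝ) 1) = eVariationOn (f ∘ id) (Icc 0 1) := rfl
    _ ≤ (K : ENNReal) * eVariationOn (id : ℝ → ℝ) (Icc 0 1) := h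
    _ ≤ (K : ENNReal) * ENNReal.ofReal ((1:ℝ) - 0) := by gcongr
    _ = K := by norm_num

lemma exists_path_of_lipschitz {E : Type*} [MetricSpace E] {p q : E} (f : ℝ → E) (K : ℝ≥0)
    (hf : LipschitzWith K f) (h0 : f 0 = p) (h1 : f 1 = q) :
    ∃ γ : Path p q, (∀ t : unitInterval, γ t = f t) ∧
      eVariationOn (fun t => γ t) univ ≤ (K : ENNReal) := by
  refine ⟨{ toFun := fun t => f t,
            continuous_toFun := hf.continuous.comp continuous_subtype_val,
            source' := by simpa using h0,
            target' := by simpa using h1 }, fun t => rfl, ?_⟩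
  calc eVariationOn (fun t : unitInterval => f t) univ
      = eVariationOn f (Icc 0 1) := eVar_path_eq f
    _ ≤ (K : ENNReal) := eVar_le_of_lipschitz hf

lemma unitInterval_univ_eq' : (univ : Set unitInterval) = Icc 0 1 := by
  ext t
  simp only [mem_univ, true_iff, mem_Icc]
  exact ⟨t.2.1, t.2.2⟩

lemma eVar_trans_le {E : Type*} [EMetricSpace E] {x y z : E} (γ₁ : Path x y) (γ₂ : Path y z) :
    eVariationOn (fun t => (γ₁.trans γ₂) t) univ ≤
      eVariationOn (fun t => γ₁ t) univ + eVariationOn (fun t => γ₂ t) univ := by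
  set f : unitInterval → E := fun t => (γ₁.trans γ₂) t with hf
  have hhalf : (1/2 : ℝ) ∈ unitInterval := by constructor <;> norm_num
  set h : unitInterval := ⟨1/2, hhalf⟩ with hh
  have h0h : (0 : unitInterval) ≤ h := by
    rw [← Subtype.coe_le_coe]; norm_num [hh]
  have hh1 : h ≤ (1 : unitInterval) := by
    rw [← Subtype.coe_le_coe]; norm_num [hh]
  have key := eVariationOn.Icc_add_Icc f h0h hh1 (mem_univ h)
  have huniv : univ ∩ Icc (0:unitInterval) 1 = univ := by
    rw [← unitInterval_univ_eq', inter_self]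
  rw [univ_inter, univ_inter, huniv] at key
  rw [← key]
  gcongr
  · set φ₁ : unitInterval → unitInterval :=
      fun t => ⟨min (2*(t:ℝ)) 1, ⟨le_min (by linarith [t.2.1]) zero_le_one, min_le_right _ _⟩⟩
      with hφ₁
    have hEq : EqOn f ((fun t => γ₁ t) ∘ φ₁) (Icc 0 h) := by
      intro t ht
      have ht2 : (t:ℝ) ≤ 1/2 := ht.2
      simp only [hf, Function.comp_apply, Path.trans_apply, dif_pos ht2]
      congr 1
      exact Subtype.ext (min_eq_left (by linarith)).symm
    rw [eVariationOn.eq_of_eqOn hEq]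
    exact eVariationOn.comp_le_of_monotoneOn _ φ₁
      (fun a _ b _ hab => by
        simp only [hφ₁, Subtype.mk_le_mk]
        exact Subtype.coe_le_coe.1 (min_le_min (by linarith [Subtype.coe_le_coe.2 hab]) le_rfl))
      (mapsTo_univ _ _)
  · set φ₂ : unitInterval → unitInterval :=
      fun t => ⟨max (2*(t:ℝ) - 1) 0, ⟨le_max_right _ _,
        max_le (by linarith [t.2.2]) zero_le_one⟩⟩ with hφ₂
    have hEq : EqOn f ((fun t => γ₂ t) ∘ φ₂) (Icc h 1) := by
      intro t ht
      have ht1 : (1/2 : ℝ) ≤ (t:ℝ) := ht.1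
      simp only [hf, Function.comp_apply, Path.trans_apply]
      split_ifs with h'
      · have htt : (t : ℝ) = 1/2 := le_antisymm h' ht1
        have e2 : φ₂ t = 0 := Subtype.ext (by simp [hφ₂, htt])
        rw [e2, γ₂.source]
        exact (congrArg γ₁ (Subtype.ext (show 2*(t:ℝ) = ((1:unitInterval):ℝ) by
          rw [htt]; norm_num))).trans γ₁.target
      · congr 1
        exact Subtype.ext (max_eq_left (by linarith [not_le.1 h'])).symm
    rw [eVariationOn.eq_of_eqOn hEq]
    exact eVariationOn.comp_le_of_monotoneOn _ φ₂
      (fun a _ b _ hab => by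
        simp only [hφ₂, Subtype.mk_le_mk]
        exact Subtype.coe_le_coe.1 (max_le_max (by linarith [Subtype.coe_le_coe.2 hab]) le_rfl))
      (mapsTo_univ _ _)

lemma exists_perp {k : ℕ} (hk : 1 < k) (u : EuclideanSpace ℝ (Fin k)) :
    ∃ e : EuclideanSpace ℝ (Fin k), ‖e‖ = 1 ∧ (inner ℝ u e : ℝ) = 0 := by
  have hne : (ℝ ∙ u)ᗮ ≠ ⊥ := by
    intro hbot
    rw [Submodule.orthogonal_eq_bot_iff] at hbot
    have h1 : Module.finrank ℝ (ℝ ∙ u) ≤ 1 := by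
      rcases eq_or_ne u 0 with h | h
      · rw [h, Submodule.span_zero_singleton]; simp
      · rw [finrank_span_singleton h]
    have h2 : Module.finrank ℝ (⊤ : Submodule ℝ (EuclideanSpace ℝ (Fin k))) = k := by
      rw [finrank_top, finrank_euclideanSpace_fin]
    rw [hbot] at h1
    omega
  obtain ⟨w, hw, hw0⟩ := Submodule.exists_mem_ne_zero_of_ne_bot hne
  refine ⟨‖w‖⁻¹ • w, ?_, ?_⟩
  · rw [norm_smul, norm_inv, norm_norm, inv_mul_cancel₀ (norm_ne_zero_iff.2 hw0)]
  · rw [real_inner_smul_right]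
    have h := (Submodule.mem_orthogonal _ w).1 hw u (Submodule.mem_span_singleton_self u)
    rw [h, mul_zero]

lemma key_ineq {A B θ N : ℝ} (hA : 0 < A) (hB : 0 < B) (hθ0 : 0 ≤ θ) (hθπ : θ ≤ π)
    (hN : 0 ≤ N)
    (hN2 : π^2*(A-B)^2 + 4*(min A B)^2*θ^2 ≤ π^2*N^2) :
    (A - min A B) + (min A B)*θ + (B - min A B) ≤ π*N := by
  have hπ : (3:ℝ) < π := Real.pi_gt_three
  have hπ2 : (9:ℝ) ≤ π^2 := by nlinarith
  rcases le_total A B with h | h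
  · rw [min_eq_left h] at hN2 ⊢
    have hsq : ((B-A) + A*θ)^2 ≤ (π*N)^2 := by
      nlinarith [sq_nonneg ((B-A) - 2*A*θ), hN2, sq_nonneg (B-A), sq_nonneg (2*A*θ)]
    have hL0 : 0 ≤ (B-A) + A*θ := by nlinarith
    have hR0 : 0 ≤ π*N := by positivity
    nlinarith [hsq, hL0, hR0]
  · rw [min_eq_right h] at hN2 ⊢
    have hsq : ((A-B) + B*θ)^2 ≤ (π*N)^2 := by
      nlinarith [sq_nonneg ((A-B) - 2*B*θ), hN2, sq_nonneg (A-B), sq_nonneg (2*B*θ)]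
    have hL0 : 0 ≤ (A-B) + B*θ := by nlinarith
    have hR0 : 0 ≤ π*N := by positivity
    nlinarith [hsq, hL0, hR0]

lemma key_ineq' {A B m θ N ip : ℝ} (hA : 0 < A) (hB : 0 < B) (hm : m = min A B)
    (hθ0 : 0 ≤ θ) (hθπ : θ ≤ π) (hN : 0 ≤ N)
    (h3 : 2*θ^2 ≤ π^2*(1 - ip))
    (hNsq : N^2 = A^2 + B^2 - 2*(A*B)*ip) :
    (A - m) + m*θ + (B - m) ≤ π*N := by
  have hm0 : 0 < m := hm ▸ lt_min hA hB
  have hmA : m ≤ A := hm ▸ min_le_left _ _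
  have hmB : m ≤ B := hm ▸ min_le_right _ _
  have hABm : m^2 ≤ A*B := by nlinarith
  have hN2 : π^2*(A-B)^2 + 4*m^2*θ^2 ≤ π^2*N^2 := by
    have hAB0 : (0:ℝ) ≤ 2*(A*B) := by positivity
    have h8 := mul_le_mul_of_nonneg_left h3 hAB0
    have h9 : (0:ℝ) ≤ (A*B - m^2)*θ^2 := mul_nonneg (sub_nonneg.2 hABm) (sq_nonneg θ)
    nlinarith [h8, h9, hNsq]
  have := key_ineq hA hB hθ0 hθπ hN (by rw [← hm]; exact hN2)
  rw [← hm] at this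
  exact this

lemma norm_combo {F : Type*} [NormedAddCommGroup F] [InnerProductSpace ℝ F] {u e : F}
    (hu : ‖u‖ = 1) (he : ‖e‖ = 1) (hue : (inner ℝ u e : ℝ) = 0) (a b : ℝ) :
    ‖a • u + b • e‖^2 = a^2 + b^2 := by
  rw [norm_add_sq_real, norm_smul, norm_smul, real_inner_smul_left, real_inner_smul_right, hue,
    hu, he, Real.norm_eq_abs, Real.norm_eq_abs]
  simp [sq_abs]

end helpers


lemma radial_lipschitz {F : Type*} [NormedAddCommGroup F] [NormedSpace ℝ F] (c u : F)
    (hnu : ‖u‖ = 1) (a d : ℝ) :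
    LipschitzWith (|d|).toNNReal (fun t : ℝ => c + (a + t*d) • u) := by
  apply LipschitzWith.of_dist_le_mul
  intro s t
  have hsub : (c + (a + s*d) • u) - (c + (a + t*d) • u) = ((s - t)*d) • u := by
    rw [add_sub_add_left_eq_sub, ← sub_smul]
    congr 1
    ring
  rw [dist_eq_norm, hsub, norm_smul, Real.norm_eq_abs, hnu, mul_one, abs_mul,
    Real.coe_toNNReal _ (abs_nonneg d), dist_eq_norm, Real.norm_eq_abs, mul_comm]

lemma arc_lipschitz {F : Type*} [NormedAddCommGroup F] [InnerProductSpace ℝ F] {u e : F}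
    (hnu : ‖u‖ = 1) (hne : ‖e‖ = 1) (hue : (inner ℝ u e : ℝ) = 0) {m θ : ℝ}
    (hm : 0 ≤ m) (hθ : 0 ≤ θ) (c : F) :
    LipschitzWith (m*θ).toNNReal
      (fun t : ℝ => c + ((m * Real.cos (θ*t)) • u + (m * Real.sin (θ*t)) • e)) := by
  apply LipschitzWith.of_dist_le_mul
  intro a b
  have hsub : (c + ((m * Real.cos (θ*a)) • u + (m * Real.sin (θ*a)) • e))
      - (c + ((m * Real.cos (θ*b)) • u + (m * Real.sin (θ*b)) • e))
      = (m * (Real.cos (θ*a) - Real.cos (θ*b))) • u +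
        (m * (Real.sin (θ*a) - Real.sin (θ*b))) • e := by
    rw [add_sub_add_left_eq_sub, add_sub_add_comm, ← sub_smul, ← sub_smul, mul_sub m, mul_sub m]
  have htrig : (Real.cos (θ*a) - Real.cos (θ*b))^2 + (Real.sin (θ*a) - Real.sin (θ*b))^2
      = 2 - 2*Real.cos (θ*a - θ*b) := by
    have h1 := Real.sin_sq_add_cos_sq (θ*a)
    have h2 := Real.sin_sq_add_cos_sq (θ*b)
    rw [Real.cos_sub]
    linear_combination h1 + h2
  have hcosb : 2 - 2*Real.cos (θ*a - θ*b) ≤ (θ*a - θ*b)^2 := by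
    have := Real.one_sub_sq_div_two_le_cos (x := θ*a - θ*b)
    linarith
  have h6 := mul_le_mul_of_nonneg_left hcosb (sq_nonneg m)
  have h1 : ‖(c + ((m * Real.cos (θ*a)) • u + (m * Real.sin (θ*a)) • e))
      - (c + ((m * Real.cos (θ*b)) • u + (m * Real.sin (θ*b)) • e))‖^2 ≤ (m*θ*|a - b|)^2 := by
    rw [hsub, norm_combo hnu hne hue]
    calc (m*(Real.cos (θ*a) - Real.cos (θ*b)))^2 + (m*(Real.sin (θ*a) - Real.sin (θ*b)))^2
        = m^2*((Real.cos (θ*a) - Real.cos (θ*b))^2 + (Real.sin (θ*a) - Real.sin (θ*b))^2) := by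
          ring
      _ = m^2*(2 - 2*Real.cos (θ*a - θ*b)) := by rw [htrig]
      _ ≤ m^2*((θ*a - θ*b)^2) := h6
      _ = (m*θ*|a - b|)^2 := by rw [mul_pow, mul_pow, sq_abs]; ring
  have h2 : (0:ℝ) ≤ m*θ*|a - b| := by positivity
  rw [dist_eq_norm, dist_eq_norm, Real.norm_eq_abs,
    Real.coe_toNNReal _ (by positivity : (0:ℝ) ≤ m*θ)]
  nlinarith [h1, h2, norm_nonneg ((c + ((m * Real.cos (θ*a)) • u + (m * Real.sin (θ*a)) • e))
      - (c + ((m * Real.cos (θ*b)) • u + (m * Real.sin (θ*b)) • e)))]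

lemma arc_norm_sq {F : Type*} [NormedAddCommGroup F] [InnerProductSpace ℝ F] {u e : F}
    (hnu : ‖u‖ = 1) (hne : ‖e‖ = 1) (hue : (inner ℝ u e : ℝ) = 0) (m x : ℝ) :
    ‖(m * Real.cos x) • u + (m * Real.sin x) • e‖^2 = m^2 := by
  rw [norm_combo hnu hne hue]
  nlinarith [Real.sin_sq_add_cos_sq x]

/-- The complement of a closed Euclidean ball in `ℝᵏ`, `k > 1`, is Lipschitz normally
embedded with constant `π`: the inner distance between any two points of the
complement is at most `π` times their Euclidean distance. -/
theorem ball_complement_LNE (k : ℕ) (hk : 1 < k) (c : EuclideanSpace ℝ (Fin k)) (r : ℝ) :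
    ∀ p ∈ (Set.univ \ Metric.closedBall c r), ∀ q ∈ (Set.univ \ Metric.closedBall c r),
      innerEDist (Set.univ \ Metric.closedBall c r) p q ≤
        ENNReal.ofReal (Real.pi * ‖p - q‖) := by
  intro p hp q hq
  have hπ3 : (3:ℝ) < π := Real.pi_gt_three
  rcases lt_or_ge r 0 with hr | hr0
  · -- the ball is empty : straight segment
    have hball : Metric.closedBall c r = ∅ := Metric.closedBall_eq_empty.2 hr
    obtain ⟨f, hfdef⟩ : ∃ f : ℝ → EuclideanSpace ℝ (Fin k), f = fun t => p + t • (q - p) :=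
      ⟨_, rfl⟩
    have hlip : LipschitzWith ‖q - p‖₊ f := by
      apply LipschitzWith.of_dist_le_mul
      intro a b
      have hsub : f a - f b = (a - b) • (q - p) := by
        simp only [hfdef]
        rw [add_sub_add_left_eq_sub, ← sub_smul]
      rw [dist_eq_norm, hsub, norm_smul, Real.norm_eq_abs, dist_eq_norm, Real.norm_eq_abs,
        coe_nnnorm, mul_comm]
    obtain ⟨γ, hγt, hγv⟩ := exists_path_of_lipschitz (p := p) (q := q) f _ hlip
      (by simp [hfdef]) (by simp [hfdef])
    refine le_trans (iInf₂_le γ ?_) ?_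
    · intro x _
      simp [hball]
    · refine hγv.trans ?_
      rw [← ENNReal.ofReal_coe_nnreal, coe_nnnorm]
      apply ENNReal.ofReal_le_ofReal
      rw [norm_sub_rev]
      nlinarith [norm_nonneg (p - q)]
  · -- main case
    obtain ⟨X, hXdef⟩ : ∃ X, X = (Set.univ \ Metric.closedBall c r) := ⟨_, rfl⟩
    rw [← hXdef] at hp hq ⊢
    have hp' : r < ‖p - c‖ := by
      have := hp
      rw [hXdef, mem_diff, Metric.mem_closedBall, not_le, dist_eq_norm] at this
      exact this.2
    have hq' : r < ‖q - c‖ := by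
      have := hq
      rw [hXdef, mem_diff, Metric.mem_closedBall, not_le, dist_eq_norm] at this
      exact this.2
    obtain ⟨A, hAdef⟩ : ∃ x, x = ‖p - c‖ := ⟨_, rfl⟩
    obtain ⟨B, hBdef⟩ : ∃ x, x = ‖q - c‖ := ⟨_, rfl⟩
    rw [← hAdef] at hp'
    rw [← hBdef] at hq'
    have hA0 : 0 < A := lt_of_le_of_lt hr0 hp'
    have hB0 : 0 < B := lt_of_le_of_lt hr0 hq'
    obtain ⟨m, hmdef⟩ : ∃ x, x = min A B := ⟨_, rfl⟩
    have hm0 : 0 < m := hmdef ▸ lt_min hA0 hB0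
    have hmr : r < m := hmdef ▸ lt_min hp' hq'
    have hmA : m ≤ A := hmdef ▸ min_le_left _ _
    have hmB : m ≤ B := hmdef ▸ min_le_right _ _
    obtain ⟨u, hudef⟩ : ∃ u, u = A⁻¹ • (p - c) := ⟨_, rfl⟩
    obtain ⟨v, hvdef⟩ : ∃ v, v = B⁻¹ • (q - c) := ⟨_, rfl⟩
    have hu : A • u = p - c := by
      rw [hudef, smul_smul, mul_inv_cancel₀ hA0.ne', one_smul]
    have hv : B • v = q - c := by
      rw [hvdef, smul_smul, mul_inv_cancel₀ hB0.ne', one_smul]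
    have hnu : ‖u‖ = 1 := by
      rw [hudef, norm_smul, norm_inv, Real.norm_eq_abs, abs_of_pos hA0, ← hAdef,
        inv_mul_cancel₀ hA0.ne']
    have hnv : ‖v‖ = 1 := by
      rw [hvdef, norm_smul, norm_inv, Real.norm_eq_abs, abs_of_pos hB0, ← hBdef,
        inv_mul_cancel₀ hB0.ne']
    obtain ⟨ip, hipdef⟩ : ∃ x : ℝ, x = (inner ℝ u v : ℝ) := ⟨_, rfl⟩
    have hip1 : |ip| ≤ 1 := by
      have := abs_real_inner_le_norm u v
      rw [hnu, hnv, one_mul] at this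
      rw [hipdef]
      exact this
    have hipl : -1 ≤ ip := (abs_le.1 hip1).1
    have hipr : ip ≤ 1 := (abs_le.1 hip1).2
    obtain ⟨θ, hθdef⟩ : ∃ x, x = Real.arccos ip := ⟨_, rfl⟩
    have hθ0 : 0 ≤ θ := hθdef ▸ Real.arccos_nonneg ip
    have hθπ : θ ≤ π := hθdef ▸ Real.arccos_le_pi ip
    have hcos : Real.cos θ = ip := hθdef ▸ Real.cos_arccos hipl hipr
    have hsin : Real.sin θ = Real.sqrt (1 - ip^2) := by
      rw [hθdef, Real.sin_arccos]
    -- find e₂ with v = cos θ • u + sin θ • e₂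
    have hkey : ∃ e₂ : EuclideanSpace ℝ (Fin k), ‖e₂‖ = 1 ∧ (inner ℝ u e₂ : ℝ) = 0 ∧
        Real.cos θ • u + Real.sin θ • e₂ = v := by
      obtain ⟨z, hz⟩ : ∃ z, z = v - ip • u := ⟨_, rfl⟩
      have hnz : ‖z‖^2 = 1 - ip^2 := by
        have hc : (inner ℝ v u : ℝ) = ip := by rw [hipdef]; exact (real_inner_comm v u).symm
        rw [hz, norm_sub_sq_real, real_inner_smul_right, norm_smul, Real.norm_eq_abs, hnv, hnu,
          hc]
        ring_nf
        rw [sq_abs]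
        ring
      rcases eq_or_ne z 0 with hz0 | hz0
      · obtain ⟨e, he1, he2⟩ := exists_perp hk u
        refine ⟨e, he1, he2, ?_⟩
        have h10 : 1 - ip^2 = 0 := by rw [← hnz, hz0]; simp
        have hsin0 : Real.sin θ = 0 := by rw [hsin, h10, Real.sqrt_zero]
        have hveq : v - ip • u = 0 := by rw [← hz, hz0]
        rw [hsin0, zero_smul, add_zero, hcos]
        have := sub_eq_zero.1 hveq
        rw [this]
      · refine ⟨‖z‖⁻¹ • z, ?_, ?_, ?_⟩
        · rw [norm_smul, norm_inv, norm_norm, inv_mul_cancel₀ (norm_ne_zero_iff.2 hz0)]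
        · rw [real_inner_smul_right]
          have hzu : (inner ℝ u z : ℝ) = 0 := by
            rw [hz, inner_sub_right, real_inner_smul_right, real_inner_self_eq_norm_sq, hnu,
              ← hipdef]
            ring
          rw [hzu, mul_zero]
        · have hnz' : ‖z‖ = Real.sqrt (1 - ip^2) := by
            rw [← hnz, Real.sqrt_sq (norm_nonneg z)]
          rw [hcos, hsin, ← hnz', smul_smul, mul_inv_cancel₀ (norm_ne_zero_iff.2 hz0), one_smul,
            hz]
          abel
    obtain ⟨e₂, hne₂, hue₂, hv_eq⟩ := hkey
    -- the three pieces
    obtain ⟨f₁, hf₁⟩ : ∃ f : ℝ → EuclideanSpace ℝ (Fin k),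
        f = fun t => c + (A + t*(m - A)) • u := ⟨_, rfl⟩
    obtain ⟨f₂, hf₂⟩ : ∃ f : ℝ → EuclideanSpace ℝ (Fin k),
        f = fun t => c + ((m * Real.cos (θ*t)) • u + (m * Real.sin (θ*t)) • e₂) := ⟨_, rfl⟩
    obtain ⟨f₃, hf₃⟩ : ∃ f : ℝ → EuclideanSpace ℝ (Fin k),
        f = fun t => c + (m + t*(B - m)) • v := ⟨_, rfl⟩
    -- Lipschitz bounds
    have hlip₁ : LipschitzWith (A - m).toNNReal f₁ := by
      have he : (|m - A|).toNNReal = (A - m).toNNReal := by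
        rw [abs_sub_comm, abs_of_nonneg (by linarith : (0:ℝ) ≤ A - m)]
      rw [hf₁, ← he]
      exact radial_lipschitz c u hnu A (m - A)
    have hlip₃ : LipschitzWith (B - m).toNNReal f₃ := by
      have he : (|B - m|).toNNReal = (B - m).toNNReal := by
        rw [abs_of_nonneg (by linarith : (0:ℝ) ≤ B - m)]
      rw [hf₃, ← he]
      exact radial_lipschitz c v hnv m (B - m)
    have hlip₂ : LipschitzWith (m * θ).toNNReal f₂ := by
      rw [hf₂]
      exact arc_lipschitz hnu hne₂ hue₂ hm0.le hθ0 c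
    -- membership
    have hmemX : ∀ w : EuclideanSpace ℝ (Fin k), r < ‖w‖ → c + w ∈ X := by
      intro w hw
      rw [hXdef]
      refine ⟨mem_univ _, ?_⟩
      rw [Metric.mem_closedBall, not_le, dist_eq_norm, add_sub_cancel_left]
      exact hw
    have hmem₁ : ∀ t ∈ Icc (0:ℝ) 1, f₁ t ∈ X := by
      intro t ht
      simp only [hf₁]
      apply hmemX
      rw [norm_smul, Real.norm_eq_abs, hnu, mul_one,
        abs_of_pos (by nlinarith [ht.1, ht.2] : (0:ℝ) < A + t*(m - A))]
      nlinarith [ht.1, ht.2]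
    have hmem₃ : ∀ t ∈ Icc (0:ℝ) 1, f₃ t ∈ X := by
      intro t ht
      simp only [hf₃]
      apply hmemX
      rw [norm_smul, Real.norm_eq_abs, hnv, mul_one,
        abs_of_pos (by nlinarith [ht.1, ht.2] : (0:ℝ) < m + t*(B - m))]
      nlinarith [ht.1, ht.2]
    have hmem₂ : ∀ t ∈ Icc (0:ℝ) 1, f₂ t ∈ X := by
      intro t ht
      simp only [hf₂]
      apply hmemX
      have hsq : ‖(m * Real.cos (θ*t)) • u + (m * Real.sin (θ*t)) • e₂‖^2 = m^2 :=
        arc_norm_sq hnu hne₂ hue₂ m (θ*t)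
      nlinarith [hsq, norm_nonneg ((m * Real.cos (θ*t)) • u + (m * Real.sin (θ*t)) • e₂)]
    -- endpoints
    have he₁0 : f₁ 0 = p := by
      simp only [hf₁]
      rw [show A + 0*(m - A) = A by ring, hu, add_sub_cancel]
    have he₁1 : f₁ 1 = c + m • u := by
      simp only [hf₁]
      rw [show A + 1*(m - A) = m by ring]
    have he₂0 : f₂ 0 = c + m • u := by
      simp only [hf₂, mul_zero, Real.cos_zero, Real.sin_zero, mul_one]
      simp
    have he₂1 : f₂ 1 = c + m • v := by
      simp only [hf₂, mul_one]
      rw [mul_smul, mul_smul, ← smul_add, hv_eq]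
    have he₃0 : f₃ 0 = c + m • v := by
      simp only [hf₃]
      rw [show m + 0*(B - m) = m by ring]
    have he₃1 : f₃ 1 = q := by
      simp only [hf₃]
      rw [show m + 1*(B - m) = B by ring, hv, add_sub_cancel]
    -- build paths
    obtain ⟨γ₁, hγ₁t, hγ₁v⟩ := exists_path_of_lipschitz (p := p) (q := c + m • u) f₁ _
      hlip₁ he₁0 he₁1
    obtain ⟨γ₂, hγ₂t, hγ₂v⟩ := exists_path_of_lipschitz (p := c + m • u) (q := c + m • v) f₂ _
      hlip₂ he₂0 he₂1
    obtain ⟨γ₃, hγ₃t, hγ₃v⟩ := exists_path_of_lipschitz (p := c + m • v) (q := q) f₃ _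
      hlip₃ he₃0 he₃1
    obtain ⟨γ, hγ⟩ : ∃ γ : Path p q, γ = (γ₁.trans γ₂).trans γ₃ := ⟨_, rfl⟩
    have hrange : Set.range ⇑γ ⊆ X := by
      rw [hγ, Path.trans_range, Path.trans_range]
      refine union_subset (union_subset ?_ ?_) ?_ <;> rintro _ ⟨t, rfl⟩
      · rw [hγ₁t]; exact hmem₁ t ⟨t.2.1, t.2.2⟩
      · rw [hγ₂t]; exact hmem₂ t ⟨t.2.1, t.2.2⟩
      · rw [hγ₃t]; exact hmem₃ t ⟨t.2.1, t.2.2⟩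
    refine le_trans (iInf₂_le γ hrange) ?_
    have hvar : eVariationOn (fun t => γ t) univ ≤
        (((A - m).toNNReal : ENNReal) + ((m*θ).toNNReal : ENNReal))
          + ((B - m).toNNReal : ENNReal) := by
      rw [hγ]
      refine le_trans (eVar_trans_le _ γ₃) ?_
      exact add_le_add (le_trans (eVar_trans_le γ₁ γ₂) (add_le_add hγ₁v hγ₂v)) hγ₃v
    refine hvar.trans ?_
    have hco : ∀ x : ℝ, ((x.toNNReal : ENNReal)) = ENNReal.ofReal x := fun _ => rfl
    rw [hco, hco, hco,
      ← ENNReal.ofReal_add (by linarith : (0:ℝ) ≤ A - m)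
        (mul_nonneg hm0.le hθ0 : (0:ℝ) ≤ m*θ),
      ← ENNReal.ofReal_add
        (by have := mul_nonneg hm0.le hθ0; linarith : (0:ℝ) ≤ (A - m) + m*θ)
        (by linarith : (0:ℝ) ≤ B - m)]
    apply ENNReal.ofReal_le_ofReal
    -- the key geometric inequality
    have hpq : p - q = A • u - B • v := by rw [hu, hv, sub_sub_sub_cancel_right]
    have hNsq : ‖p - q‖^2 = A^2 + B^2 - 2*(A*B)*ip := by
      rw [hpq, norm_sub_sq_real, real_inner_smul_left, real_inner_smul_right, norm_smul,
        norm_smul, hnu, hnv, Real.norm_eq_abs, Real.norm_eq_abs, abs_of_pos hA0, abs_of_pos hB0,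
        ← hipdef]
      ring
    have habs : |θ| ≤ π := abs_le.2 ⟨by linarith, hθπ⟩
    have hcb := Real.cos_le_one_sub_mul_cos_sq habs
    have hππ : (0:ℝ) < π^2 := by positivity
    have h3 : 2*θ^2 ≤ π^2*(1 - ip) := by
      rw [← hcos]
      have h6 : 2/π^2*θ^2 ≤ 1 - Real.cos θ := by linarith [hcb]
      have h7 : 2*θ^2 = (2/π^2*θ^2)*π^2 := by field_simp
      rw [h7]
      calc (2/π^2*θ^2)*π^2 ≤ (1 - Real.cos θ)*π^2 := mul_le_mul_of_nonneg_right h6 hππ.le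
        _ = π^2*(1 - Real.cos θ) := by ring
    exact key_ineq' hA0 hB0 hmdef hθ0 hθπ (norm_nonneg (p - q)) h3 hNsq


end
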